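/- Let K ≥ 3, and let u_1, …, u_t be independent mean-zero random vectors in ℝ^p with finite fourth moments, each of which is (4,2,K)-hypercontractive. Then for any matrices M_1, …, M_t ∈ ℝ^{m×p}, the random vector X = M_1 u_1 + ⋯ + M_t u_t is (4,2,K)-hypercontractive, i.e. for every v ∈ ℝ^m, E[⟨v, X⟩⁴] ≤ K · (E[⟨v, X⟩²])². -/

import Mathlib

open MeasureTheory ProbabilityTheory
open scoped ProbabilityTheory

section Aux

variable {Ω : Type*} [MeasureSpace Ω] [IsProbabilityMeasure (ℙ : Measure Ω)]

private lemma integrable_pow_of_memLp4 {f : Ω → ℝ} (hf : MemLp f 4 ℙ) {k : ℕ} (hk : k ≤ 4) :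
    Integrable (fun ω => f ω ^ k) ℙ := by
  have h4 : Integrable (fun ω => f ω ^ 4) ℙ := by
    have hff : MemLp (fun ω => f ω * f ω) 2 ℙ := by
      haveI : ENNReal.HolderTriple 4 4 2 := ⟨by
        rw [← two_mul, show (4:ENNReal) = 2 * 2 by norm_num, ENNReal.mul_inv (by norm_num) (by norm_num),
          ← mul_assoc, ENNReal.mul_inv_cancel (by norm_num) (by norm_num), one_mul]⟩
      have := hf.smul (𝕜 := ℝ) hf (p := 4) (q := 4) (r := 2)
      exact this
    have := hff.integrable_sq
    convert this using 2 with ω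
    ring
  have hg : Integrable (fun ω => 1 + |f ω| ^ 4) ℙ := by
    refine (integrable_const 1).add ?_
    have := h4.abs
    simpa [abs_pow] using this
  refine hg.mono' ?_ ?_
  · exact (hf.aestronglyMeasurable.aemeasurable.pow_const k).aestronglyMeasurable
  · refine Filter.Eventually.of_forall fun ω => ?_
    rw [Real.norm_eq_abs, abs_pow]
    rcases le_or_gt (|f ω|) 1 with h | h
    · have : |f ω| ^ k ≤ 1 := pow_le_one₀ (abs_nonneg _) h
      have h4n : (0:ℝ) ≤ |f ω| ^ 4 := by positivity
      linarith
    · have h1 : |f ω| ^ k ≤ |f ω| ^ 4 := pow_le_pow_right₀ h.le hk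
      linarith

private lemma step_aux (K : ℝ) (hK : 3 ≤ K) {S Z : Ω → ℝ}
    (hSm : Measurable S) (hZm : Measurable Z)
    (hindep : IndepFun S Z ℙ)
    (hS4 : MemLp S 4 ℙ) (hZ4 : MemLp Z 4 ℙ)
    (hSmean : ∫ ω, S ω = 0) (hZmean : ∫ ω, Z ω = 0)
    (hShyp : ∫ ω, (S ω) ^ 4 ≤ K * (∫ ω, (S ω) ^ 2) ^ 2)
    (hZhyp : ∫ ω, (Z ω) ^ 4 ≤ K * (∫ ω, (Z ω) ^ 2) ^ 2) :
    (∫ ω, (S ω + Z ω) ^ 2 = (∫ ω, (S ω) ^ 2) + ∫ ω, (Z ω) ^ 2) ∧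
    (∫ ω, (S ω + Z ω) ^ 4 ≤ K * ((∫ ω, (S ω) ^ 2) + ∫ ω, (Z ω) ^ 2) ^ 2) := by
  have hSi : ∀ (k : ℕ), k ≤ 4 → Integrable (fun ω => S ω ^ k) ℙ :=
    fun k hk => integrable_pow_of_memLp4 hS4 hk
  have hZi : ∀ (k : ℕ), k ≤ 4 → Integrable (fun ω => Z ω ^ k) ℙ :=
    fun k hk => integrable_pow_of_memLp4 hZ4 hk
  have hindep_pow : ∀ a b : ℕ, IndepFun (fun ω => S ω ^ a) (fun ω => Z ω ^ b) ℙ :=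
    fun a b => hindep.comp (measurable_id.pow_const a) (measurable_id.pow_const b)
  have hmix : ∀ a b : ℕ,
      (∫ ω, S ω ^ a * Z ω ^ b) = (∫ ω, S ω ^ a) * ∫ ω, Z ω ^ b := by
    intro a b
    exact (hindep_pow a b).integral_mul_eq_mul_integral ((hSm.pow_const a).aestronglyMeasurable)
      ((hZm.pow_const b).aestronglyMeasurable)
  have hmixi : ∀ a b : ℕ, a ≤ 4 → b ≤ 4 →
      Integrable (fun ω => S ω ^ a * Z ω ^ b) ℙ := by
    intro a b ha hb
    exact (hindep_pow a b).integrable_mul (hSi a ha) (hZi b hb)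
  set a2 := ∫ ω, (S ω) ^ 2 with ha2
  set b2 := ∫ ω, (Z ω) ^ 2 with hb2
  have ha2nn : 0 ≤ a2 := integral_nonneg fun ω => by positivity
  have hb2nn : 0 ≤ b2 := integral_nonneg fun ω => by positivity
  have hS1 : ∫ ω, S ω ^ 1 = 0 := by simpa using hSmean
  have hZ1 : ∫ ω, Z ω ^ 1 = 0 := by simpa using hZmean
  have c11 : ∫ ω, S ω ^ 1 * Z ω ^ 1 = 0 := by rw [hmix 1 1, hS1]; ring
  have c31 : ∫ ω, S ω ^ 3 * Z ω ^ 1 = 0 := by rw [hmix 3 1, hZ1]; ring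
  have c13 : ∫ ω, S ω ^ 1 * Z ω ^ 3 = 0 := by rw [hmix 1 3, hS1]; ring
  have c22 : ∫ ω, S ω ^ 2 * Z ω ^ 2 = a2 * b2 := hmix 2 2
  constructor
  · calc ∫ ω, (S ω + Z ω) ^ 2
        = ∫ ω, (S ω ^ 2 + (2 * (S ω ^ 1 * Z ω ^ 1) + Z ω ^ 2)) := by
          congr 1; funext ω; ring
      _ = (∫ ω, S ω ^ 2) + ∫ ω, (2 * (S ω ^ 1 * Z ω ^ 1) + Z ω ^ 2) :=
          integral_add (hSi 2 (by norm_num))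
            (((hmixi 1 1 (by norm_num) (by norm_num)).const_mul 2).add (hZi 2 (by norm_num)))
      _ = a2 + ((∫ ω, 2 * (S ω ^ 1 * Z ω ^ 1)) + ∫ ω, Z ω ^ 2) := by
          rw [integral_add ((hmixi 1 1 (by norm_num) (by norm_num)).const_mul 2)
            (hZi 2 (by norm_num))]
      _ = a2 + b2 := by rw [integral_const_mul, c11]; ring
  · have iZ4 : Integrable (fun ω => Z ω ^ 4) ℙ := hZi 4 le_rfl
    have iB3 : Integrable (fun ω => 4 * (S ω ^ 1 * Z ω ^ 3) + Z ω ^ 4) ℙ :=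
      ((hmixi 1 3 (by norm_num) (by norm_num)).const_mul 4).add iZ4
    have iB2 : Integrable (fun ω => 6 * (S ω ^ 2 * Z ω ^ 2)
        + (4 * (S ω ^ 1 * Z ω ^ 3) + Z ω ^ 4)) ℙ :=
      ((hmixi 2 2 (by norm_num) (by norm_num)).const_mul 6).add iB3
    have iB1 : Integrable (fun ω => 4 * (S ω ^ 3 * Z ω ^ 1) + (6 * (S ω ^ 2 * Z ω ^ 2)
        + (4 * (S ω ^ 1 * Z ω ^ 3) + Z ω ^ 4))) ℙ :=
      ((hmixi 3 1 (by norm_num) (by norm_num)).const_mul 4).add iB2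
    have hint : ∫ ω, (S ω + Z ω) ^ 4
        = (∫ ω, S ω ^ 4) + 6 * (a2 * b2) + ∫ ω, Z ω ^ 4 := by
      calc ∫ ω, (S ω + Z ω) ^ 4
          = ∫ ω, (S ω ^ 4 + (4 * (S ω ^ 3 * Z ω ^ 1) + (6 * (S ω ^ 2 * Z ω ^ 2)
              + (4 * (S ω ^ 1 * Z ω ^ 3) + Z ω ^ 4)))) := by
            congr 1; funext ω; ring
        _ = (∫ ω, S ω ^ 4) + ∫ ω, (4 * (S ω ^ 3 * Z ω ^ 1) + (6 * (S ω ^ 2 * Z ω ^ 2)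
              + (4 * (S ω ^ 1 * Z ω ^ 3) + Z ω ^ 4))) := integral_add (hSi 4 le_rfl) iB1
        _ = (∫ ω, S ω ^ 4) + ((∫ ω, 4 * (S ω ^ 3 * Z ω ^ 1)) + ∫ ω, (6 * (S ω ^ 2 * Z ω ^ 2)
              + (4 * (S ω ^ 1 * Z ω ^ 3) + Z ω ^ 4))) := by
            rw [integral_add ((hmixi 3 1 (by norm_num) (by norm_num)).const_mul 4) iB2]
        _ = (∫ ω, S ω ^ 4) + ((∫ ω, 4 * (S ω ^ 3 * Z ω ^ 1)) + ((∫ ω, 6 * (S ω ^ 2 * Z ω ^ 2))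
              + ∫ ω, (4 * (S ω ^ 1 * Z ω ^ 3) + Z ω ^ 4))) := by
            rw [integral_add ((hmixi 2 2 (by norm_num) (by norm_num)).const_mul 6) iB3]
        _ = (∫ ω, S ω ^ 4) + ((∫ ω, 4 * (S ω ^ 3 * Z ω ^ 1)) + ((∫ ω, 6 * (S ω ^ 2 * Z ω ^ 2))
              + ((∫ ω, 4 * (S ω ^ 1 * Z ω ^ 3)) + ∫ ω, Z ω ^ 4))) := by
            rw [integral_add ((hmixi 1 3 (by norm_num) (by norm_num)).const_mul 4) iZ4]
        _ = (∫ ω, S ω ^ 4) + 6 * (a2 * b2) + ∫ ω, Z ω ^ 4 := by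
            rw [integral_const_mul, integral_const_mul, integral_const_mul, c31, c13, c22]; ring
    rw [hint]
    have hKab : 0 ≤ (K - 3) * (a2 * b2) :=
      mul_nonneg (by linarith) (mul_nonneg ha2nn hb2nn)
    nlinarith [hShyp, hZhyp, hKab]

private lemma sum_hyp (K : ℝ) (hK : 3 ≤ K) {ι : Type*} (Y : ι → Ω → ℝ)
    (hmeasY : ∀ i, Measurable (Y i))
    (hindepY : iIndepFun Y ℙ)
    (hL4 : ∀ i, MemLp (Y i) 4 ℙ)
    (hmeanY : ∀ i, ∫ ω, Y i ω = 0)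
    (hhypY : ∀ i, ∫ ω, (Y i ω) ^ 4 ≤ K * (∫ ω, (Y i ω) ^ 2) ^ 2)
    (s : Finset ι) :
    (∫ ω, (∑ i ∈ s, Y i ω) ^ 2 = ∑ i ∈ s, ∫ ω, (Y i ω) ^ 2) ∧
    (∫ ω, (∑ i ∈ s, Y i ω) ^ 4 ≤ K * (∑ i ∈ s, ∫ ω, (Y i ω) ^ 2) ^ 2) := by
  induction s using Finset.cons_induction with
  | empty => simp
  | cons a s ha ih =>
    obtain ⟨ih2, ih4⟩ := ih
    have hZm : Measurable (fun ω => ∑ i ∈ s, Y i ω) :=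
      Finset.measurable_sum s fun i _ => hmeasY i
    have hZ4 : MemLp (fun ω => ∑ i ∈ s, Y i ω) 4 ℙ :=
      memLp_finset_sum s fun i _ => hL4 i
    have hZmean : ∫ ω, ∑ i ∈ s, Y i ω = 0 := by
      rw [integral_finset_sum s fun i _ => (hL4 i).integrable (by norm_num)]
      simp [hmeanY]
    have hindepSZ : IndepFun (Y a) (fun ω => ∑ i ∈ s, Y i ω) ℙ := by
      have := (hindepY.indepFun_finsetSum_of_notMem hmeasY ha).symm
      have he : (∑ j ∈ s, Y j) = fun ω => ∑ i ∈ s, Y i ω := by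
        funext ω; simp
      rwa [he] at this
    have hZhyp : ∫ ω, (∑ i ∈ s, Y i ω) ^ 4 ≤ K * (∫ ω, (∑ i ∈ s, Y i ω) ^ 2) ^ 2 := by
      rw [ih2]; exact ih4
    have hstep := step_aux K hK (hmeasY a) hZm hindepSZ (hL4 a) hZ4 (hmeanY a) hZmean
      (hhypY a) hZhyp
    constructor
    · rw [show (∫ ω, (∑ i ∈ Finset.cons a s ha, Y i ω) ^ 2)
          = ∫ ω, (Y a ω + ∑ i ∈ s, Y i ω) ^ 2 by simp [Finset.sum_cons],
        hstep.1, Finset.sum_cons, ih2]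
    · rw [show (∫ ω, (∑ i ∈ Finset.cons a s ha, Y i ω) ^ 4)
          = ∫ ω, (Y a ω + ∑ i ∈ s, Y i ω) ^ 4 by simp [Finset.sum_cons],
        Finset.sum_cons, ← ih2]
      exact hstep.2

end Aux

theorem hypercontractive_of_linear_transform
    {Ω : Type*} [MeasureSpace Ω] [IsProbabilityMeasure (ℙ : Measure Ω)]
    (K : ℝ) (hK : 3 ≤ K) (t m p : ℕ)
    (u : Fin t → Ω → (Fin p → ℝ))
    (hmeas : ∀ i, Measurable (u i))
    (hindep : iIndepFun u ℙ)
    (hmom : ∀ (i : Fin t) (j : Fin p), MemLp (fun ω => u i ω j) 4 ℙ)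
    (hmean : ∀ (i : Fin t) (j : Fin p), ∫ ω, u i ω j = 0)
    (hhyp : ∀ (i : Fin t) (v : Fin p → ℝ),
      ∫ ω, (∑ j, v j * u i ω j) ^ 4 ≤ K * (∫ ω, (∑ j, v j * u i ω j) ^ 2) ^ 2)
    (M : Fin t → Matrix (Fin m) (Fin p) ℝ) :
    ∀ v : Fin m → ℝ,
      ∫ ω, (∑ a, v a * (∑ i, (M i).mulVec (u i ω)) a) ^ 4 ≤
        K * (∫ ω, (∑ a, v a * (∑ i, (M i).mulVec (u i ω)) a) ^ 2) ^ 2 := by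
  intro v
  set w : Fin t → Fin p → ℝ := fun i j => ∑ a, v a * M i a j with hw
  set Y : Fin t → Ω → ℝ := fun i ω => ∑ j, w i j * u i ω j with hY
  have key : ∀ ω, (∑ a, v a * (∑ i, (M i).mulVec (u i ω)) a) = ∑ i, Y i ω := by
    intro ω
    simp only [hY, hw, Matrix.mulVec, dotProduct, Finset.sum_apply, Finset.mul_sum,
      Finset.sum_mul]
    rw [Finset.sum_comm]
    refine Finset.sum_congr rfl fun i _ => ?_
    rw [Finset.sum_comm]
    refine Finset.sum_congr rfl fun j _ => ?_
    refine Finset.sum_congr rfl fun a _ => ?_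
    ring
  have hmeasY : ∀ i, Measurable (Y i) := fun i =>
    Finset.measurable_sum _ fun j _ => ((measurable_pi_apply j).comp (hmeas i)).const_mul _
  have hindepY : iIndepFun Y ℙ := by
    have := hindep.comp (fun i (x : Fin p → ℝ) => ∑ j, w i j * x j)
      (fun i => Finset.measurable_sum _ fun j _ => (measurable_pi_apply j).const_mul _)
    exact this
  have hL4 : ∀ i, MemLp (Y i) 4 ℙ := fun i =>
    memLp_finset_sum _ fun j _ => (hmom i j).const_mul _
  have hmeanY : ∀ i, ∫ ω, Y i ω = 0 := by
    intro i
    rw [hY]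
    simp only
    rw [integral_finset_sum _ fun j _ => ((hmom i j).integrable (by norm_num)).const_mul _]
    simp [integral_const_mul, hmean]
  have hhypY : ∀ i, ∫ ω, (Y i ω) ^ 4 ≤ K * (∫ ω, (Y i ω) ^ 2) ^ 2 := fun i => hhyp i (w i)
  obtain ⟨h2, h4⟩ := sum_hyp K hK Y hmeasY hindepY hL4 hmeanY hhypY Finset.univ
  simp only [key]
  rw [h2]
  exact h4
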